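/- Let L be a real Lie algebra of finite dimension n. Then there exist linear maps F₁, …, Fₙ : ℝⁿ → ℝⁿ, vectors v₁, …, vₙ ∈ ℝⁿ and scalars λ₁, …, λₙ ∈ ℝ with Fᵢ(vᵢ) = λᵢ·vᵢ for each i, together with a linear isomorphism e : L → (ℝⁿ)* such that for all x, y ∈ L: e([x,y]) = Σ_{i=1}^{n} ( (e y)(vᵢ) · Fᵢ*(e x) − (e x)(vᵢ) · Fᵢ*(e y) ). In other words, every finite-dimensional real Lie algebra is isomorphic to ((ℝⁿ)*, [·,·]_{F₁,v₁,…,Fₙ,vₙ}) where [ψ,φ]_{F₁,v₁,…,Fₙ,vₙ} = Σᵢ [ψ,φ]_{Fᵢ,vᵢ}. -/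

import Mathlib

/-- The bracket on the dual space associated with a linear map `T : ℝⁿ → ℝⁿ` and a
vector `u ∈ ℝⁿ`: `[ψ,φ]_{T,u} = φ(u)·T*(ψ) − ψ(u)·T*(φ)`. -/
noncomputable def dualBracket {n : ℕ}
    (T : (Fin n → ℝ) →ₗ[ℝ] (Fin n → ℝ)) (u : Fin n → ℝ)
    (ψ φ : Module.Dual ℝ (Fin n → ℝ)) : Module.Dual ℝ (Fin n → ℝ) :=
  φ u • T.dualMap ψ - ψ u • T.dualMap φ

/-- Every `n`-dimensional real Lie algebra `L` is isomorphic to `(ℝⁿ)*` equipped with a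
combined bracket `[ψ,φ]_{F₁,v₁,…,Fₙ,vₙ} = Σᵢ [ψ,φ]_{Fᵢ,vᵢ}` for some linear maps
`Fᵢ : ℝⁿ → ℝⁿ` and eigenvectors `vᵢ` of `Fᵢ`. -/
theorem lieAlgebra_iso_sum_dualBracket (L : Type*) [LieRing L] [LieAlgebra ℝ L]
    [FiniteDimensional ℝ L] (n : ℕ) (hn : n = Module.finrank ℝ L) :
    ∃ (F : Fin n → ((Fin n → ℝ) →ₗ[ℝ] (Fin n → ℝ)))
      (v : Fin n → (Fin n → ℝ)) (lam : Fin n → ℝ),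
      (∀ i, (F i) (v i) = lam i • v i) ∧
      ∃ e : L ≃ₗ[ℝ] Module.Dual ℝ (Fin n → ℝ),
        ∀ x y : L, e ⁅x, y⁆ = ∑ i, dualBracket (F i) (v i) (e x) (e y) := by
  classical
  have b : Module.Basis (Fin n) ℝ L := Module.finBasisOfFinrankEq ℝ L hn.symm
  set c : Fin n → Fin n → Fin n → ℝ := fun i j k => b.equivFun ⁅b i, b j⁆ k with hc
  have hcskew : ∀ i j k, c j i k = - c i j k := by
    intro i j k
    have hskew : ⁅b j, b i⁆ = -⁅b i, b j⁆ := by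
      rw [← lie_skew (b i) (b j), neg_neg]
    simp only [hc, hskew, map_neg, Pi.neg_apply]
  have hcself : ∀ i k, c i i k = 0 := by
    intro i k; simp [hc]
  set a : Fin n → Fin n → Fin n → ℝ := fun i j m =>
    (1/2) * ((if i = m then c m j m else 0) + (if j = m then c m i m else 0) - c i j m) with ha
  have hakey : ∀ p q m, a q p m - a p q m = c p q m := by
    intro p q m
    simp only [ha]
    rw [hcskew q p m]
    ring
  set F : Fin n → ((Fin n → ℝ) →ₗ[ℝ] (Fin n → ℝ)) :=
    fun i => Matrix.mulVecLin (fun j m => a i j m) with hF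
  have hFapp : ∀ i u j, F i u j = ∑ m, a i j m * u m := by
    intro i u j
    simp only [hF]; rfl
  refine ⟨F, fun i => Pi.single i 1, fun _ => 0, ?_, ?_⟩
  · intro i
    ext j
    have h1 : F i (Pi.single i 1) j = a i j i := by
      rw [hFapp]
      simp [Pi.single_apply, mul_ite, Finset.sum_ite_eq']
    rw [h1]
    simp only [ha, zero_smul, Pi.zero_apply]
    rcases eq_or_ne j i with h | h
    · subst h; simp [hcself]
    · simp only [if_pos rfl, if_neg h, if_true]
      ring
  · set e : L ≃ₗ[ℝ] Module.Dual ℝ (Fin n → ℝ) :=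
      b.equivFun.trans (Pi.basisFun ℝ (Fin n)).toDualEquiv with he
    have heb : ∀ (p : Fin n) (w : Fin n → ℝ), e (b p) w = w p := by
      intro p w
      have hbp : b.equivFun (b p) = (Pi.basisFun ℝ (Fin n)) p := by
        ext j
        simp [Module.Basis.equivFun_self, Pi.basisFun_apply, Pi.single_apply, eq_comm]
      have h2 : e (b p) = (Pi.basisFun ℝ (Fin n)).toDual ((Pi.basisFun ℝ (Fin n)) p) := by
        rw [he]
        simp only [LinearEquiv.trans_apply, hbp, Module.Basis.toDualEquiv_apply]
      rw [h2, Module.Basis.toDual_apply_right, Pi.basisFun_repr]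
    refine ⟨e, ?_⟩
    -- bilinear maps
    have key : ∀ p q : Fin n,
        e ⁅b p, b q⁆ = ∑ i, dualBracket (F i) (Pi.single i 1) (e (b p)) (e (b q)) := by
      intro p q
      refine LinearMap.ext fun w => ?_
      have hL : e ⁅b p, b q⁆ w = ∑ k, c p q k * w k := by
        have hexp : ⁅b p, b q⁆ = ∑ k, c p q k • b k := by
          conv_lhs => rw [← b.sum_equivFun ⁅b p, b q⁆]
        rw [hexp]
        simp only [map_sum, map_smul, LinearMap.coe_sum, Finset.sum_apply,
          LinearMap.smul_apply]
        refine Finset.sum_congr rfl fun k _ => ?_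
        rw [heb]
        simp
      rw [hL]
      simp only [LinearMap.coe_sum, Finset.sum_apply, dualBracket,
        LinearMap.sub_apply, LinearMap.smul_apply, LinearMap.dualMap_apply,
        smul_eq_mul]
      have hsingle : ∀ (p i : Fin n), e (b p) (Pi.single i 1) = if i = p then 1 else 0 := by
        intro p i; rw [heb]; simp [Pi.single_apply, eq_comm]
      simp only [hsingle, heb]
      rw [Finset.sum_congr rfl (fun i _ => by
        rw [hFapp, hFapp] : ∀ i ∈ Finset.univ,
          ((if i = q then (1:ℝ) else 0) * F i w p - (if i = p then (1:ℝ) else 0) * F i w q)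
          = ((if i = q then (1:ℝ) else 0) * ∑ m, a i p m * w m
            - (if i = p then (1:ℝ) else 0) * ∑ m, a i q m * w m))]
      simp only [ite_mul, one_mul, zero_mul]
      rw [Finset.sum_sub_distrib, Finset.sum_ite_eq' Finset.univ q,
        Finset.sum_ite_eq' Finset.univ p]
      simp only [Finset.mem_univ, if_true]
      rw [← Finset.sum_sub_distrib]
      refine Finset.sum_congr rfl fun m _ => ?_
      rw [← sub_mul, hakey]
    -- reduce to basis via bilinearity
    set B1 : L →ₗ[ℝ] L →ₗ[ℝ] Module.Dual ℝ (Fin n → ℝ) :=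
      LinearMap.mk₂ ℝ (fun x y => e ⁅x, y⁆)
        (fun x x' y => by rw [add_lie, map_add])
        (fun r x y => by rw [smul_lie, map_smul])
        (fun x y y' => by rw [lie_add, map_add])
        (fun r x y => by rw [lie_smul, map_smul]) with hB1
    set B2 : L →ₗ[ℝ] L →ₗ[ℝ] Module.Dual ℝ (Fin n → ℝ) :=
      LinearMap.mk₂ ℝ (fun x y => ∑ i, dualBracket (F i) (Pi.single i 1) (e x) (e y))
        (fun x x' y => by
          simp only [dualBracket, map_add, LinearMap.add_apply, add_smul, smul_add,
            ← Finset.sum_add_distrib]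
          refine Finset.sum_congr rfl fun i _ => ?_
          module)
        (fun r x y => by
          simp only [dualBracket, map_smul, LinearMap.smul_apply, smul_eq_mul,
            Finset.smul_sum]
          refine Finset.sum_congr rfl fun i _ => ?_
          module)
        (fun x y y' => by
          simp only [dualBracket, map_add, LinearMap.add_apply, add_smul, smul_add,
            ← Finset.sum_add_distrib]
          refine Finset.sum_congr rfl fun i _ => ?_
          module)
        (fun r x y => by
          simp only [dualBracket, map_smul, LinearMap.smul_apply, smul_eq_mul,
            Finset.smul_sum]
          refine Finset.sum_congr rfl fun i _ => ?_
          module) with hB2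
    have hB : B1 = B2 := LinearMap.ext_basis b b fun p q => key p q
    intro x y
    have := LinearMap.congr_fun (LinearMap.congr_fun hB x) y
    simpa [hB1, hB2] using this
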